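/- Let a, b ∈ Δₙ be strictly positive probability vectors, C ∈ ℝ₊^{n×n}, γ > 0, K := exp(−C/γ). (i) For the Sinkhorn iterates (f_k, g_k) started from arbitrary f₀, g₀ ∈ ℝⁿ, for every k ≥ 2: max_i(f_k − γ log a)_i − min_i(f_k − γ log a)_i ≤ ‖C‖_∞ and max_j(g_k − γ log b)_j − min_j(g_k − γ log b)_j ≤ ‖C‖_∞. (ii) For any dual optimal solution (f*, g*), i.e. any pair such that P* := diag(e^{f*/γ}) K diag(e^{g*/γ}) satisfies P*𝟏ₙ = a and P*ᵀ𝟏ₙ = b, the same two inequalities hold with (f*, g*) in place of (f_k, g_k). -/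

import Mathlib

/-- The dual entropic OT objective
`h(f,g) = ⟨f,a⟩ + ⟨g,b⟩ − γ Σ_{i,j} exp((f_i + g_j − C_{ij})/γ)`. -/
noncomputable def dualObj {n : ℕ} (a b : Fin n → ℝ) (C : Matrix (Fin n) (Fin n) ℝ)
    (γ : ℝ) (f g : Fin n → ℝ) : ℝ :=
  (∑ i, f i * a i) + (∑ j, g j * b j) -
    γ * ∑ i, ∑ j, Real.exp ((f i + g j - C i j) / γ)

/-- The transport plan `P = diag(e^{f/γ}) K diag(e^{g/γ})` with `K = exp(−C/γ)`. -/
noncomputable def plan {n : ℕ} (C : Matrix (Fin n) (Fin n) ℝ) (γ : ℝ)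
    (f g : Fin n → ℝ) : Matrix (Fin n) (Fin n) ℝ :=
  fun i j => Real.exp (f i / γ) * Real.exp (-C i j / γ) * Real.exp (g j / γ)

/-- `(f k, g k)` is the sequence of Sinkhorn iterates (in dual form): for even `k`,
`f (k+1) = γ log a − γ log (K e^{g k / γ})` and `g (k+1) = g k`; for odd `k`,
`f (k+1) = f k` and `g (k+1) = γ log b − γ log (Kᵀ e^{f k / γ})`,
where `K = exp(−C/γ)`. -/
def SinkhornSeq {n : ℕ} (a b : Fin n → ℝ) (C : Matrix (Fin n) (Fin n) ℝ) (γ : ℝ)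
    (f g : ℕ → Fin n → ℝ) : Prop :=
  ∀ k : ℕ,
    (Even k →
      f (k+1) = (fun i => γ * Real.log (a i) -
        γ * Real.log (∑ j, Real.exp (-C i j / γ) * Real.exp (g k j / γ))) ∧
      g (k+1) = g k) ∧
    (¬ Even k →
      f (k+1) = f k ∧
      g (k+1) = (fun j => γ * Real.log (b j) -
        γ * Real.log (∑ i, Real.exp (-C i j / γ) * Real.exp (f k i / γ))))

/-- **Equicontinuity corollary for Sinkhorn iterates and dual optimal solutions**
(Corollary 1 of the paper). (i) For every `k ≥ 2`, the Sinkhorn dual iterates satisfy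
`max(f_k − γ log a) − min(f_k − γ log a) ≤ ‖C‖_∞` and
`max(g_k − γ log b) − min(g_k − γ log b) ≤ ‖C‖_∞`.
(ii) The same bounds hold for any dual optimal solution `(f*, g*)`, i.e. any pair
whose plan `diag(e^{f*/γ}) K diag(e^{g*/γ})` has row sums `a` and column sums `b`. -/
lemma bound_aux {n : ℕ} [Nonempty (Fin n)] {γ : ℝ} (hγ : 0 < γ)
    (C : Matrix (Fin n) (Fin n) ℝ) (hC : ∀ i j, 0 ≤ C i j)
    (M : ℝ) (hM : ∀ i j, C i j ≤ M)
    (w : Fin n → ℝ) (hw : ∀ j, 0 < w j)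
    (φ : Fin n → ℝ)
    (hφ : ∀ i, φ i = -(γ * Real.log (∑ j, Real.exp (-C i j / γ) * w j))) :
    (⨆ i, φ i) - (⨅ i, φ i) ≤ M := by
  set T : ℝ := ∑ j, w j with hTdef
  have hT : 0 < T := Finset.sum_pos (fun j _ => hw j) Finset.univ_nonempty
  set S : Fin n → ℝ := fun i => ∑ j, Real.exp (-C i j / γ) * w j with hSdef
  have hSpos : ∀ i, 0 < S i :=
    fun i => Finset.sum_pos (fun j _ => mul_pos (Real.exp_pos _) (hw j)) Finset.univ_nonempty
  have hSub : ∀ i, S i ≤ T := by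
    intro i
    apply Finset.sum_le_sum
    intro j _
    have h1 : Real.exp (-C i j / γ) ≤ 1 := by
      rw [Real.exp_le_one_iff]
      exact div_nonpos_of_nonpos_of_nonneg (neg_nonpos.mpr (hC i j)) hγ.le
    nlinarith [hw j]
  have hSlb : ∀ i, Real.exp (-M / γ) * T ≤ S i := by
    intro i
    rw [Finset.mul_sum]
    apply Finset.sum_le_sum
    intro j _
    have h1 : Real.exp (-M / γ) ≤ Real.exp (-C i j / γ) := by
      apply Real.exp_le_exp.mpr
      apply div_le_div_of_nonneg_right (by linarith [hM i j]) hγ.le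
    nlinarith [hw j, Real.exp_pos (-C i j / γ)]
  have hub : ∀ i, φ i ≤ M - γ * Real.log T := by
    intro i
    rw [hφ i]
    have hlog : -M / γ + Real.log T ≤ Real.log (S i) := by
      have := Real.log_le_log (by positivity) (hSlb i)
      rwa [Real.log_mul (Real.exp_ne_zero _) hT.ne', Real.log_exp] at this
    have h2 : γ * (-M / γ + Real.log T) ≤ γ * Real.log (S i) :=
      mul_le_mul_of_nonneg_left hlog hγ.le
    have h3 : γ * (-M / γ + Real.log T) = -M + γ * Real.log T := by
      field_simp
    linarith [h2, h3.symm.le]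
  have hlb : ∀ i, -(γ * Real.log T) ≤ φ i := by
    intro i
    rw [hφ i]
    have hlog : Real.log (S i) ≤ Real.log T := Real.log_le_log (hSpos i) (hSub i)
    nlinarith
  have h1 : (⨆ i, φ i) ≤ M - γ * Real.log T := ciSup_le hub
  have h2 : -(γ * Real.log T) ≤ ⨅ i, φ i := le_ciInf hlb
  linarith

theorem sinkhorn_equicontinuity_corollary {n : ℕ} (a b : Fin n → ℝ)
    (C : Matrix (Fin n) (Fin n) ℝ) (γ : ℝ) (hγ : 0 < γ)
    (ha0 : ∀ i, 0 < a i) (hb0 : ∀ j, 0 < b j)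
    (ha1 : ∑ i, a i = 1) (hb1 : ∑ j, b j = 1)
    (hC : ∀ i j, 0 ≤ C i j)
    (f g : ℕ → Fin n → ℝ) (hiter : SinkhornSeq a b C γ f g) :
    (∀ k : ℕ, 2 ≤ k →
      ((⨆ i, (f k i - γ * Real.log (a i))) - (⨅ i, (f k i - γ * Real.log (a i))) ≤
          ⨆ i, ⨆ j, |C i j|) ∧
      ((⨆ j, (g k j - γ * Real.log (b j))) - (⨅ j, (g k j - γ * Real.log (b j))) ≤
          ⨆ i, ⨆ j, |C i j|)) ∧
    (∀ fs gs : Fin n → ℝ,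
      (∀ i, ∑ j, plan C γ fs gs i j = a i) →
      (∀ j, ∑ i, plan C γ fs gs i j = b j) →
      ((⨆ i, (fs i - γ * Real.log (a i))) - (⨅ i, (fs i - γ * Real.log (a i))) ≤
          ⨆ i, ⨆ j, |C i j|) ∧
      ((⨆ j, (gs j - γ * Real.log (b j))) - (⨅ j, (gs j - γ * Real.log (b j))) ≤
          ⨆ i, ⨆ j, |C i j|)) := by
  have hn : 0 < n := by
    by_contra h
    push_neg at h
    interval_cases n
    simp at ha1
  haveI : Nonempty (Fin n) := Fin.pos_iff_nonempty.mp hn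
  set M : ℝ := ⨆ i, ⨆ j, |C i j| with hMdef
  have hM : ∀ i j, C i j ≤ M := by
    intro i j
    calc C i j ≤ |C i j| := le_abs_self _
    _ ≤ ⨆ j, |C i j| := le_ciSup (f := fun j => |C i j|) ((Set.finite_range _).bddAbove) j
    _ ≤ M := le_ciSup (f := fun i => ⨆ j, |C i j|) ((Set.finite_range _).bddAbove) i
  have hMT : ∀ i j, C.transpose i j ≤ M := fun i j => hM j i
  have hCT : ∀ i j, 0 ≤ C.transpose i j := fun i j => hC j i
  -- a function is an "f-update" / "g-update"
  have Pf : ∀ k : ℕ, 1 ≤ k → ∃ ψ : Fin n → ℝ, f k = fun i => γ * Real.log (a i) -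
      γ * Real.log (∑ j, Real.exp (-C i j / γ) * Real.exp (ψ j / γ)) := by
    intro k hk
    induction k, hk using Nat.le_induction with
    | base => exact ⟨g 0, ((hiter 0).1 Even.zero).1⟩
    | succ k hk ih =>
      by_cases hke : Even k
      · exact ⟨g k, ((hiter k).1 hke).1⟩
      · obtain ⟨ψ, hψ⟩ := ih
        exact ⟨ψ, (((hiter k).2 hke).1).trans hψ⟩
  have Pg : ∀ k : ℕ, 2 ≤ k → ∃ ψ : Fin n → ℝ, g k = fun j => γ * Real.log (b j) -
      γ * Real.log (∑ i, Real.exp (-C i j / γ) * Real.exp (ψ i / γ)) := by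
    intro k hk
    induction k, hk using Nat.le_induction with
    | base => exact ⟨f 1, ((hiter 1).2 (by decide)).2⟩
    | succ k hk ih =>
      by_cases hke : Even k
      · obtain ⟨ψ, hψ⟩ := ih
        exact ⟨ψ, (((hiter k).1 hke).2).trans hψ⟩
      · exact ⟨f k, ((hiter k).2 hke).2⟩
  constructor
  · intro k hk
    constructor
    · obtain ⟨ψ, hψ⟩ := Pf k (by omega)
      apply bound_aux hγ C hC M hM (fun j => Real.exp (ψ j / γ)) (fun j => Real.exp_pos _)
      intro i
      rw [hψ]
      ring
    · obtain ⟨ψ, hψ⟩ := Pg k hk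
      apply bound_aux hγ C.transpose hCT M hMT (fun i => Real.exp (ψ i / γ))
        (fun i => Real.exp_pos _)
      intro j
      rw [hψ]
      simp only [Matrix.transpose_apply]
      ring
  · intro fs gs hrow hcol
    have key : ∀ (c : Fin n → ℝ) (hc : ∀ i, 0 < c i) (u v : Fin n → ℝ)
        (D : Matrix (Fin n) (Fin n) ℝ) (hD : ∀ i j, 0 ≤ D i j) (hDM : ∀ i j, D i j ≤ M)
        (h : ∀ i, Real.exp (u i / γ) *
          (∑ j, Real.exp (-D i j / γ) * Real.exp (v j / γ)) = c i),
        (⨆ i, (u i - γ * Real.log (c i))) - (⨅ i, (u i - γ * Real.log (c i))) ≤ M := by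
      intro c hc u v D hD hDM h
      apply bound_aux hγ D hD M hDM (fun j => Real.exp (v j / γ)) (fun j => Real.exp_pos _)
      intro i
      have hSpos : 0 < ∑ j, Real.exp (-D i j / γ) * Real.exp (v j / γ) :=
        Finset.sum_pos (fun j _ => mul_pos (Real.exp_pos _) (Real.exp_pos _))
          Finset.univ_nonempty
      have hlog : Real.log (c i) = u i / γ +
          Real.log (∑ j, Real.exp (-D i j / γ) * Real.exp (v j / γ)) := by
        rw [← h i, Real.log_mul (Real.exp_ne_zero _) hSpos.ne', Real.log_exp]
      rw [hlog]
      field_simp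
      ring
    constructor
    · apply key a ha0 fs gs C hC hM
      intro i
      rw [Finset.mul_sum, ← hrow i]
      apply Finset.sum_congr rfl
      intro j _
      simp [plan, mul_assoc]
    · apply key b hb0 gs fs C.transpose hCT hMT
      intro j
      rw [Finset.mul_sum, ← hcol j]
      apply Finset.sum_congr rfl
      intro i _
      simp [plan, Matrix.transpose_apply]
      ring
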